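/- Let A, B, C be m×m complex idempotent matrices (A² = A, B² = B, C² = C). Then rank([A, B, C]) = rank(A) + rank(B) + rank(C) − rank([A·B, A·C]) − rank([B·A, B·C]) − rank([C·A, C·B]) + rank([A·B, A·C, B·A, B·C, C·A, C·B]), where [M₁, …, M_j] denotes the block row matrix formed by placing the matrices side by side. -/

import Mathlib

open Matrix Submodule LinearMap Module

variable {E : Type*} [AddCommGroup E] [Module ℂ E] [FiniteDimensional ℂ E]

/-- The sum map `E × E × E →ₗ E`. -/
noncomputable def sigma3 (E : Type*) [AddCommGroup E] [Module ℂ E] : E × E × E →ₗ[ℂ] E :=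
  LinearMap.id.coprod (LinearMap.id.coprod LinearMap.id)

omit [FiniteDimensional ℂ E] in
lemma sigma3_apply (x : E × E × E) : sigma3 E x = x.1 + x.2.1 + x.2.2 := by
  simp [sigma3, add_assoc]

lemma dim_sup3 (P Q R : Submodule ℂ E) :
    finrank ℂ ↥(P ⊔ Q ⊔ R) + finrank ℂ ↥((P.prod (Q.prod R)) ⊓ LinearMap.ker (sigma3 E)) =
      finrank ℂ P + finrank ℂ Q + finrank ℂ R := by
  set ι : (↥P × ↥Q × ↥R) →ₗ[ℂ] E × E × E := P.subtype.prodMap (Q.subtype.prodMap R.subtype)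
  have hι : Function.Injective ι := by
    rintro ⟨x1, x2, x3⟩ ⟨y1, y2, y3⟩ h
    simp only [ι, LinearMap.prodMap_apply, Prod.mk.injEq, Submodule.coe_subtype] at h
    obtain ⟨h1, h2, h3⟩ := h
    exact Prod.ext (Subtype.ext h1) (Prod.ext (Subtype.ext h2) (Subtype.ext h3))
  have hrι : LinearMap.range ι = P.prod (Q.prod R) := by
    apply le_antisymm
    · rintro x ⟨⟨v1, v2, v3⟩, rfl⟩
      exact ⟨v1.2, v2.2, v3.2⟩
    · rintro ⟨x, y, z⟩ ⟨hx, hy, hz⟩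
      exact ⟨⟨⟨x, hx⟩, ⟨y, hy⟩, ⟨z, hz⟩⟩, rfl⟩
  set φ : (↥P × ↥Q × ↥R) →ₗ[ℂ] E := (sigma3 E).comp ι
  have hrange : LinearMap.range φ = P ⊔ Q ⊔ R := by
    rw [show φ = (sigma3 E).comp ι from rfl, LinearMap.range_comp, hrι]
    apply le_antisymm
    · rintro x ⟨⟨a, b, c⟩, ⟨ha, hb, hc⟩, rfl⟩
      rw [sigma3_apply]
      exact add_mem (add_mem (Submodule.mem_sup_left (Submodule.mem_sup_left ha))
        (Submodule.mem_sup_left (Submodule.mem_sup_right hb))) (Submodule.mem_sup_right hc)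
    · refine sup_le (sup_le ?_ ?_) ?_
      · intro x hx; exact ⟨(x, 0, 0), ⟨hx, zero_mem _, zero_mem _⟩, by simp [sigma3_apply]⟩
      · intro x hx; exact ⟨(0, x, 0), ⟨zero_mem _, hx, zero_mem _⟩, by simp [sigma3_apply]⟩
      · intro x hx; exact ⟨(0, 0, x), ⟨zero_mem _, zero_mem _, hx⟩, by simp [sigma3_apply]⟩
  have hker : finrank ℂ ↥(LinearMap.ker φ) =
      finrank ℂ ↥((P.prod (Q.prod R)) ⊓ LinearMap.ker (sigma3 E)) := by
    have h1 : LinearMap.ker φ = Submodule.comap ι (LinearMap.ker (sigma3 E)) :=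
      LinearMap.ker_comp _ _
    have h2 : Submodule.map ι (Submodule.comap ι (LinearMap.ker (sigma3 E))) =
        (P.prod (Q.prod R)) ⊓ LinearMap.ker (sigma3 E) := by
      rw [Submodule.map_comap_eq, hrι]
    rw [h1, ← h2]
    exact (Submodule.equivMapOfInjective ι hι _).finrank_eq
  have := φ.finrank_range_add_finrank_ker
  rw [hrange, hker] at this
  simp only [Module.finrank_prod] at this
  omega

lemma ker_eq_ker (f g h : E →ₗ[ℂ] E) (hf : ∀ x, f (f x) = f x) (hg : ∀ x, g (g x) = g x)
    (hh : ∀ x, h (h x) = h x) :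
    ((LinearMap.range f).prod ((LinearMap.range g).prod (LinearMap.range h))) ⊓
        LinearMap.ker (sigma3 E) =
      (((LinearMap.range g ⊔ LinearMap.range h).map f).prod
        ((((LinearMap.range f ⊔ LinearMap.range h)).map g).prod
          (((LinearMap.range f ⊔ LinearMap.range g)).map h))) ⊓ LinearMap.ker (sigma3 E) := by
  have hfix : ∀ (k : E →ₗ[ℂ] E), (∀ x, k (k x) = k x) → ∀ x ∈ LinearMap.range k, k x = x := by
    rintro k hk x ⟨y, rfl⟩; exact hk y
  ext ⟨x, y, z⟩
  simp only [Submodule.mem_inf, Submodule.mem_prod, LinearMap.mem_ker, sigma3_apply]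
  constructor
  · rintro ⟨⟨hx, hy, hz⟩, hs⟩
    refine ⟨⟨?_, ?_, ?_⟩, hs⟩
    · refine ⟨-(y + z), neg_mem (add_mem (Submodule.mem_sup_left hy)
        (Submodule.mem_sup_right hz)), ?_⟩
      have hxe : x = -(y + z) := by
        have h0 : x + (y + z) = 0 := by rw [← add_assoc]; exact hs
        exact eq_neg_of_add_eq_zero_left h0
      rw [← hxe]; exact hfix f hf x hx
    · refine ⟨-(x + z), neg_mem (add_mem (Submodule.mem_sup_left hx)
        (Submodule.mem_sup_right hz)), ?_⟩
      have hye : y = -(x + z) := by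
        have h0 : y + (x + z) = 0 := by rw [show y + (x + z) = x + y + z by abel]; exact hs
        exact eq_neg_of_add_eq_zero_left h0
      rw [← hye]; exact hfix g hg y hy
    · refine ⟨-(x + y), neg_mem (add_mem (Submodule.mem_sup_left hx)
        (Submodule.mem_sup_right hy)), ?_⟩
      have hze : z = -(x + y) := by
        have h0 : z + (x + y) = 0 := by rw [show z + (x + y) = x + y + z by abel]; exact hs
        exact eq_neg_of_add_eq_zero_left h0
      rw [← hze]; exact hfix h hh z hz
  · rintro ⟨⟨hx, hy, hz⟩, hs⟩
    obtain ⟨t1, -, rfl⟩ := hx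
    obtain ⟨t2, -, rfl⟩ := hy
    obtain ⟨t3, -, rfl⟩ := hz
    exact ⟨⟨⟨t1, rfl⟩, ⟨t2, rfl⟩, ⟨t3, rfl⟩⟩, hs⟩

lemma range_fromColumns {n₁ n₂ m' : Type*} [Fintype n₁] [Fintype n₂] [Fintype m']
    (M : Matrix m' n₁ ℂ) (N : Matrix m' n₂ ℂ) :
    LinearMap.range (fromCols M N).mulVecLin =
      LinearMap.range M.mulVecLin ⊔ LinearMap.range N.mulVecLin := by
  apply le_antisymm
  · rintro x ⟨v, rfl⟩
    have hv : (fromCols M N).mulVecLin v = M *ᵥ (v ∘ Sum.inl) + N *ᵥ (v ∘ Sum.inr) := by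
      conv_lhs => rw [mulVecLin_apply, ← Sum.elim_comp_inl_inr v, fromCols_mulVec_sumElim]
    rw [hv]
    exact add_mem (Submodule.mem_sup_left ⟨_, rfl⟩) (Submodule.mem_sup_right ⟨_, rfl⟩)
  · refine sup_le ?_ ?_ <;> rintro x ⟨v, rfl⟩
    exacts [⟨Sum.elim v 0, by simp⟩, ⟨Sum.elim 0 v, by simp⟩]

lemma rank_eq_finrank_range {n₁ m' : Type*} [Fintype n₁] [Fintype m'] (M : Matrix m' n₁ ℂ) :
    M.rank = finrank ℂ ↥(LinearMap.range M.mulVecLin) := rfl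

/-- For `m × m` idempotent matrices `A`, `B`, `C`:
`rank [A, B, C] = rank A + rank B + rank C - rank [AB, AC] - rank [BA, BC] - rank [CA, CB]
  + rank [AB, AC, BA, BC, CA, CB]`. -/
theorem stmt_8 (m : ℕ) (A B C : Matrix (Fin m) (Fin m) ℂ)
    (hA : A * A = A) (hB : B * B = B) (hC : C * C = C) :
    ((Matrix.fromCols A (Matrix.fromCols B C)).rank : ℤ) =
      (A.rank : ℤ) + (B.rank : ℤ) + (C.rank : ℤ)
        - ((Matrix.fromCols (A * B) (A * C)).rank : ℤ)
        - ((Matrix.fromCols (B * A) (B * C)).rank : ℤ)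
        - ((Matrix.fromCols (C * A) (C * B)).rank : ℤ)
        + ((Matrix.fromCols (Matrix.fromCols (A * B) (A * C))
            (Matrix.fromCols (Matrix.fromCols (B * A) (B * C))
              (Matrix.fromCols (C * A) (C * B)))).rank : ℤ) := by
  set a := A.mulVecLin with ha_def
  set b := B.mulVecLin with hb_def
  set c := C.mulVecLin with hc_def
  set U := LinearMap.range a with hU_def
  set V := LinearMap.range b with hV_def
  set W := LinearMap.range c with hW_def
  have hidem : ∀ (M : Matrix (Fin m) (Fin m) ℂ), M * M = M →
      ∀ x, M.mulVecLin (M.mulVecLin x) = M.mulVecLin x := by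
    intro M hM x
    have h0 : (M * M).mulVecLin x = M.mulVecLin x := by rw [hM]
    rwa [Matrix.mulVecLin_mul, LinearMap.comp_apply] at h0
  have hrmul : ∀ (M N : Matrix (Fin m) (Fin m) ℂ),
      LinearMap.range (M * N).mulVecLin =
        (LinearMap.range N.mulVecLin).map M.mulVecLin := by
    intro M N
    rw [Matrix.mulVecLin_mul, LinearMap.range_comp]
  have e1 : (Matrix.fromCols A (Matrix.fromCols B C)).rank =
      finrank ℂ ↥(U ⊔ V ⊔ W) := by
    rw [rank_eq_finrank_range, range_fromColumns, range_fromColumns, ← sup_assoc]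
  have e2 : (Matrix.fromCols (A * B) (A * C)).rank =
      finrank ℂ ↥((V ⊔ W).map a) := by
    rw [rank_eq_finrank_range, range_fromColumns, hrmul, hrmul, ← Submodule.map_sup]
  have e3 : (Matrix.fromCols (B * A) (B * C)).rank =
      finrank ℂ ↥((U ⊔ W).map b) := by
    rw [rank_eq_finrank_range, range_fromColumns, hrmul, hrmul, ← Submodule.map_sup]
  have e4 : (Matrix.fromCols (C * A) (C * B)).rank =
      finrank ℂ ↥((U ⊔ V).map c) := by
    rw [rank_eq_finrank_range, range_fromColumns, hrmul, hrmul, ← Submodule.map_sup]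
  have e5 : (Matrix.fromCols (Matrix.fromCols (A * B) (A * C))
        (Matrix.fromCols (Matrix.fromCols (B * A) (B * C))
          (Matrix.fromCols (C * A) (C * B)))).rank =
      finrank ℂ ↥((V ⊔ W).map a ⊔ (U ⊔ W).map b ⊔ (U ⊔ V).map c) := by
    rw [rank_eq_finrank_range, range_fromColumns, range_fromColumns, range_fromColumns,
      range_fromColumns, range_fromColumns, hrmul, hrmul, hrmul, hrmul, hrmul, hrmul,
      ← Submodule.map_sup, ← Submodule.map_sup, ← Submodule.map_sup, ← sup_assoc]
  have h1 := dim_sup3 U V W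
  have h2 := dim_sup3 ((V ⊔ W).map a) ((U ⊔ W).map b) ((U ⊔ V).map c)
  have hk := ker_eq_ker a b c (hidem A hA) (hidem B hB) (hidem C hC)
  rw [← hU_def, ← hV_def, ← hW_def] at hk
  rw [← hk] at h2
  have eA : A.rank = finrank ℂ ↥U := rfl
  have eB : B.rank = finrank ℂ ↥V := rfl
  have eC : C.rank = finrank ℂ ↥W := rfl
  rw [e1, e2, e3, e4, e5, eA, eB, eC]
  omega
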